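/- Optimality of the Kamenica–Gentzkow policy with two actions: suppose A = {a₀, a₁} has exactly two elements, a* = a₀, u(a₀, ω₀) > u(a₁, ω₀) and u(a₁, ω₁) > u(a₀, ω₁) (so a₀ is the agent's uniquely optimal action when the state is known to be ω₀, and a₁ when it is known to be ω₁). Define the static persuasion value KG(p) = sup of Σ_{s ∈ S} λ_s·v(a_s, p_s) over all families (λ_s, p_s, a_s), s ∈ S, with λ_s ∈ [0,1], p_s ∈ [0,1], a_s ∈ A, Σ_{s ∈ S} λ_s = 1, Σ_{s ∈ S} λ_s·p_s = p, and u(a_s, p_s) = m(p_s) for every s. Then V*(p, m(p)) = KG(p) for every p ∈ [0,1]. -/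

import Mathlib

noncomputable section
set_option linter.unusedSectionVars false

/-- Expected payoff of action `a` at belief `p` (= probability of state `ω₁`, encoded `true`). -/
def euP {A : Type*} (u : A → Bool → ℝ) (a : A) (p : ℝ) : ℝ :=
  (1 - p) * u a false + p * u a true

/-- The agent's best static payoff `m(p)` at belief `p`. -/
def mFun {A : Type*} [Fintype A] [Nonempty A] (u : A → Bool → ℝ) (p : ℝ) : ℝ :=
  Finset.univ.sup' Finset.univ_nonempty (fun a => euP u a p)

/-- The agent's full-information payoff `M(p)` at belief `p`. -/
def MFun {A : Type*} [Fintype A] [Nonempty A] (u : A → Bool → ℝ) (p : ℝ) : ℝ :=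
  (1 - p) * Finset.univ.sup' Finset.univ_nonempty (fun a => u a false)
    + p * Finset.univ.sup' Finset.univ_nonempty (fun a => u a true)

/-- The set `W` of pairs (belief, promised utility). -/
def Wset {A : Type*} [Fintype A] [Nonempty A] (u : A → Bool → ℝ) : Set (ℝ × ℝ) :=
  {pw | pw.1 ∈ Set.Icc (0 : ℝ) 1 ∧ mFun u pw.1 ≤ pw.2 ∧ pw.2 ≤ MFun u pw.1}

/-- A family: for each signal a probability, a posterior belief, a promised continuation
utility, and a recommended action. -/
structure Fam (A S : Type*) where
  prob : S → ℝ
  belief : S → ℝ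
  promise : S → ℝ
  act : S → A

/-- Feasibility of the family `f` at the point `pw = (p, w) ∈ W`. -/
def Feasible {A S : Type*} [Fintype A] [Nonempty A] [Fintype S]
    (u : A → Bool → ℝ) (δ : ℝ) (pw : ℝ × ℝ) (f : Fam A S) : Prop :=
  (∀ s, f.prob s ∈ Set.Icc (0 : ℝ) 1) ∧
  (∀ s, (f.belief s, f.promise s) ∈ Wset u) ∧
  (∀ s, (1 - δ) * euP u (f.act s) (f.belief s) + δ * f.promise s ≥ mFun u (f.belief s)) ∧
  (∑ s, f.prob s * ((1 - δ) * euP u (f.act s) (f.belief s) + δ * f.promise s) ≥ pw.2) ∧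
  (∑ s, f.prob s * f.belief s = pw.1) ∧
  (∑ s, f.prob s = 1)

/-- The principal's payoff from the family `f`, given continuation value function `V`. -/
def famPayoff {A S : Type*} [Fintype S] (v : A → Bool → ℝ) (δ : ℝ) (V : ℝ × ℝ → ℝ)
    (f : Fam A S) : ℝ :=
  ∑ s, f.prob s * ((1 - δ) * euP v (f.act s) (f.belief s) + δ * V (f.belief s, f.promise s))

/-- The Bellman operator `T`. -/
def bellman {A S : Type*} [Fintype A] [Nonempty A] [Fintype S]
    (u v : A → Bool → ℝ) (δ : ℝ) (V : ℝ × ℝ → ℝ) (pw : ℝ × ℝ) : ℝ :=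
  sSup {x | ∃ f : Fam A S, Feasible u δ pw f ∧ x = famPayoff v δ V f}

/-- `V` is bounded on `W`. -/
def BddOnW {A : Type*} [Fintype A] [Nonempty A] (u : A → Bool → ℝ) (V : ℝ × ℝ → ℝ) : Prop :=
  ∃ C : ℝ, ∀ pw ∈ Wset u, |V pw| ≤ C

section Helpers
variable {A S : Type*} [Fintype A] [Nonempty A] [Fintype S]

lemma euP_sum (u : A → Bool → ℝ) (a : A) (lam pos : S → ℝ) (h1 : ∑ s, lam s = 1) :
    ∑ s, lam s * euP u a (pos s) = euP u a (∑ s, lam s * pos s) := by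
  simp only [euP]
  have h2 : ∑ s, lam s * ((1 - pos s) * u a false + pos s * u a true)
      = (∑ s, lam s) * u a false + (∑ s, lam s * pos s) * (u a true - u a false) := by
    rw [Finset.sum_mul, Finset.sum_mul, ← Finset.sum_add_distrib]
    exact Finset.sum_congr rfl fun s _ => by ring
  rw [h2, h1]; ring

lemma supMax2 (w : A → ℝ) (a0 a1 : A) (hall : ∀ a : A, a = a0 ∨ a = a1) :
    Finset.univ.sup' Finset.univ_nonempty w = max (w a0) (w a1) := by
  apply le_antisymm
  · apply Finset.sup'_le
    intro a _
    rcases hall a with h | h <;> subst h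
    · exact le_max_left _ _
    · exact le_max_right _ _
  · exact max_le (Finset.le_sup' w (Finset.mem_univ a0)) (Finset.le_sup' w (Finset.mem_univ a1))

lemma mFun_eq_max (u : A → Bool → ℝ) (a0 a1 : A) (hall : ∀ a : A, a = a0 ∨ a = a1) (p : ℝ) :
    mFun u p = max (euP u a0 p) (euP u a1 p) :=
  supMax2 _ a0 a1 hall

lemma euP_le_MFun (u : A → Bool → ℝ) (a : A) {p : ℝ} (hp : p ∈ Set.Icc (0:ℝ) 1) :
    euP u a p ≤ MFun u p := by
  unfold euP MFun
  have h1 : u a false ≤ Finset.univ.sup' Finset.univ_nonempty (fun a => u a false) :=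
    Finset.le_sup' (fun a => u a false) (Finset.mem_univ a)
  have h2 : u a true ≤ Finset.univ.sup' Finset.univ_nonempty (fun a => u a true) :=
    Finset.le_sup' (fun a => u a true) (Finset.mem_univ a)
  have hp0 := hp.1; have hp1 := hp.2
  nlinarith

lemma mFun_le_MFun (u : A → Bool → ℝ) {p : ℝ} (hp : p ∈ Set.Icc (0:ℝ) 1) :
    mFun u p ≤ MFun u p := by
  apply Finset.sup'_le
  intro a _
  exact euP_le_MFun u a hp

lemma mem_W_m (u : A → Bool → ℝ) {q : ℝ} (hq : q ∈ Set.Icc (0:ℝ) 1) :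
    (q, mFun u q) ∈ Wset u :=
  ⟨hq, le_refl _, mFun_le_MFun u hq⟩

lemma sum_pair_of_zero {s0 s1 : S} (hs : s0 ≠ s1) (F : S → ℝ)
    (hF : ∀ s, s ≠ s0 → s ≠ s1 → F s = 0) : ∑ s, F s = F s0 + F s1 := by
  classical
  rw [← Finset.sum_pair hs]
  refine (Finset.sum_subset (Finset.subset_univ _) ?_).symm
  intro s _ hs'
  simp only [Finset.mem_insert, Finset.mem_singleton, not_or] at hs'
  exact hF s hs'.1 hs'.2

lemma abs_affine_le (x y q : ℝ) (h0 : 0 ≤ q) (h1 : q ≤ 1) :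
    |(1 - q) * x + q * y| ≤ |x| + |y| := by
  calc |(1 - q) * x + q * y| ≤ |(1 - q) * x| + |q * y| := abs_add_le _ _
    _ = (1 - q) * |x| + q * |y| := by
        rw [abs_mul, abs_mul, abs_of_nonneg (by linarith : (0:ℝ) ≤ 1 - q), abs_of_nonneg h0]
    _ ≤ |x| + |y| := by nlinarith [abs_nonneg x, abs_nonneg y]

end Helpers

set_option maxHeartbeats 4000000 in
/-- with exactly two actions, the static Kamenica–Gentzkow policy is
optimal: `V*(p, m(p))` equals the static persuasion value at every prior `p`. -/
theorem KG_policy_optimal_two_actions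
    {A S : Type*} [Fintype A] [Nonempty A] [Fintype S]
    (u v : A → Bool → ℝ) (δ : ℝ) (astar : A)
    (hδ : δ ∈ Set.Ioo (0 : ℝ) 1)
    (hS2 : 2 ≤ Fintype.card S) (hAS : Fintype.card A ≤ Fintype.card S)
    (hv0 : 0 < v astar false) (hv1 : 0 < v astar true)
    (hvz : ∀ a : A, a ≠ astar → v a false = 0 ∧ v a true = 0)
    (Vstar : ℝ × ℝ → ℝ) (hVb : BddOnW u Vstar)
    (hVfix : ∀ pw ∈ Wset u, bellman (S := S) u v δ Vstar pw = Vstar pw)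
    (a0 a1 : A) (hne : a0 ≠ a1) (hall : ∀ a : A, a = a0 ∨ a = a1) (hastar : astar = a0)
    (hu0 : u a1 false < u a0 false) (hu1 : u a0 true < u a1 true) :
    ∀ p : ℝ, p ∈ Set.Icc (0 : ℝ) 1 →
      Vstar (p, mFun u p) =
        sSup {x : ℝ | ∃ lam pos : S → ℝ, ∃ act : S → A,
          (∀ s, lam s ∈ Set.Icc (0 : ℝ) 1) ∧ (∀ s, pos s ∈ Set.Icc (0 : ℝ) 1) ∧
          (∑ s, lam s = 1) ∧ (∑ s, lam s * pos s = p) ∧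
          (∀ s, euP u (act s) (pos s) = mFun u (pos s)) ∧
          x = ∑ s, lam s * euP v (act s) (pos s)} := by
  classical
  have hastar' := hastar.symm
  subst hastar'
  obtain ⟨C0, hC0⟩ := hVb
  set C : ℝ := max C0 0 with hCdef
  have hCnn : 0 ≤ C := le_max_right _ _
  have hC : ∀ pw ∈ Wset u, |Vstar pw| ≤ C := fun pw h => (hC0 pw h).trans (le_max_left _ _)
  have hδ0 : 0 < δ := hδ.1
  have hδ1 : δ < 1 := hδ.2
  have hva1 : v a1 false = 0 ∧ v a1 true = 0 := hvz a1 (Ne.symm hne)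
  have heva1 : ∀ q : ℝ, euP v a1 q = 0 := by
    intro q; simp [euP, hva1.1, hva1.2]
  have heu0 : ∀ a : A, euP u a 0 = u a false := by intro a; simp [euP]
  have heu1 : ∀ a : A, euP u a 1 = u a true := by intro a; simp [euP]
  have hevnn : ∀ (a : A) (q : ℝ), q ∈ Set.Icc (0:ℝ) 1 → 0 ≤ euP v a q := by
    intro a q hq
    rcases hall a with h | h <;> subst h
    · unfold euP; nlinarith [hq.1, hq.2]
    · rw [heva1]
  set Kv : ℝ := v a0 false + v a0 true with hKvdef
  have hKvnn : 0 ≤ Kv := by rw [hKvdef]; linarith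
  have hKv : ∀ (a : A) (q : ℝ), q ∈ Set.Icc (0:ℝ) 1 → euP v a q ≤ Kv := by
    intro a q hq
    rcases hall a with h | h <;> subst h
    · unfold euP; rw [hKvdef]; nlinarith [hq.1, hq.2]
    · rw [heva1]; exact hKvnn
  obtain ⟨s0, s1, hs01⟩ := Fintype.exists_pair_of_one_lt_card (show 1 < Fintype.card S by omega)
  have hm0 : mFun u 0 = u a0 false := by
    rw [mFun_eq_max u a0 a1 hall, heu0, heu0, max_eq_left hu0.le]
  have hm1 : mFun u 1 = u a1 true := by
    rw [mFun_eq_max u a0 a1 hall, heu1, heu1, max_eq_right hu1.le]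
  have hMf : ∀ q : ℝ, MFun u q = (1 - q) * u a0 false + q * u a1 true := by
    intro q
    unfold MFun
    rw [supMax2 (fun a => u a false) a0 a1 hall, supMax2 (fun a => u a true) a0 a1 hall]
    rw [max_eq_left hu0.le, max_eq_right hu1.le]
  have h0W : ((0 : ℝ), mFun u 0) ∈ Wset u := mem_W_m u ⟨le_refl _, zero_le_one⟩
  have h1W : ((1 : ℝ), mFun u 1) ∈ Wset u := mem_W_m u ⟨zero_le_one, le_refl _⟩
  -- bounded above of the Bellman sets, and the basic "V* dominates any feasible family" fact
  have hbdd : ∀ pw ∈ Wset u, BddAbove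
      {x | ∃ f : Fam A S, Feasible u δ pw f ∧ x = famPayoff v δ Vstar f} := by
    intro pw hpw
    refine ⟨(1 - δ) * Kv + δ * C, ?_⟩
    rintro x ⟨f, hf, rfl⟩
    obtain ⟨hf1, hf2, hf3, hf4, hf5, hf6⟩ := hf
    unfold famPayoff
    calc ∑ s, f.prob s * ((1-δ) * euP v (f.act s) (f.belief s) + δ * Vstar (f.belief s, f.promise s))
        ≤ ∑ s, f.prob s * ((1-δ) * Kv + δ * C) := by
          apply Finset.sum_le_sum
          intro s _
          apply mul_le_mul_of_nonneg_left _ (hf1 s).1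
          have hb := (hf2 s).1
          have h1 := hKv (f.act s) _ hb
          have h2 := (abs_le.1 (hC _ (hf2 s))).2
          have h3 : (0:ℝ) ≤ 1 - δ := by linarith
          nlinarith
      _ = (1 - δ) * Kv + δ * C := by rw [← Finset.sum_mul, hf6, one_mul]
  have hVge : ∀ pw ∈ Wset u, ∀ f : Fam A S, Feasible u δ pw f →
      famPayoff v δ Vstar f ≤ Vstar pw := by
    intro pw hpw f hf
    rw [← hVfix pw hpw]
    exact le_csSup (hbdd pw hpw) ⟨f, hf, rfl⟩
  -- the full-revelation family, feasible at every point of W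
  have hrev : ∀ pw : ℝ × ℝ, pw ∈ Wset u → ∃ f : Fam A S, Feasible u δ pw f ∧
      famPayoff v δ Vstar f =
        (1 - pw.1) * ((1-δ) * euP v a0 0 + δ * Vstar (0, mFun u 0))
        + pw.1 * ((1-δ) * euP v a1 1 + δ * Vstar (1, mFun u 1)) := by
    intro pw hpw
    obtain ⟨hp, hw1, hw2⟩ := hpw
    refine ⟨⟨fun s => if s = s0 then 1 - pw.1 else if s = s1 then pw.1 else 0,
        fun s => if s = s0 then 0 else 1,
        fun s => if s = s0 then mFun u 0 else mFun u 1,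
        fun s => if s = s0 then a0 else a1⟩, ⟨?_, ?_, ?_, ?_, ?_, ?_⟩, ?_⟩
    · intro s
      dsimp only
      split_ifs
      · exact ⟨by linarith [hp.2], by linarith [hp.1]⟩
      · exact hp
      · exact ⟨le_refl _, zero_le_one⟩
    · intro s
      dsimp only
      split_ifs
      · exact h0W
      · exact h1W
    · intro s
      dsimp only
      split_ifs
      · rw [heu0 a0, ← hm0]
        have : (1 - δ) * mFun u 0 + δ * mFun u 0 = mFun u 0 := by ring
        exact le_of_eq this.symm
      · rw [heu1 a1, ← hm1]
        have : (1 - δ) * mFun u 1 + δ * mFun u 1 = mFun u 1 := by ring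
        exact le_of_eq this.symm
    · rw [sum_pair_of_zero hs01 _ (fun s h h' => by simp [if_neg h, if_neg h'])]
      simp only [if_pos (rfl : s0 = s0), if_neg (Ne.symm hs01), if_true]
      rw [heu0 a0, ← hm0, heu1 a1, ← hm1]
      have e : (1 - pw.1) * ((1-δ) * mFun u 0 + δ * mFun u 0) + pw.1 * ((1-δ) * mFun u 1 + δ * mFun u 1)
          = (1 - pw.1) * mFun u 0 + pw.1 * mFun u 1 := by ring
      rw [e, hm0, hm1, ← hMf pw.1]
      exact hw2
    · rw [sum_pair_of_zero hs01 _ (fun s h h' => by simp [if_neg h, if_neg h'])]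
      simp only [if_pos (rfl : s0 = s0), if_neg (Ne.symm hs01), if_true]
      ring
    · rw [sum_pair_of_zero hs01 _ (fun s h h' => by simp [if_neg h, if_neg h'])]
      simp only [if_pos (rfl : s0 = s0), if_neg (Ne.symm hs01), if_true]
      ring
    · unfold famPayoff
      rw [sum_pair_of_zero hs01 _ (fun s h h' => by simp [if_neg h, if_neg h'])]
      simp only [if_pos (rfl : s0 = s0), if_neg (Ne.symm hs01), if_true]
  -- nonnegativity of V* on W
  have hVnnAux : ∀ n : ℕ, ∀ pw ∈ Wset u, -(δ^n * C) ≤ Vstar pw := by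
    intro n
    induction n with
    | zero =>
      intro pw hpw
      have := (abs_le.1 (hC pw hpw)).1
      simpa using this
    | succ n ih =>
      intro pw hpw
      obtain ⟨f, hfF, hfP⟩ := hrev pw hpw
      have h1 := hVge pw hpw f hfF
      rw [hfP] at h1
      have hp := hpw.1
      have hV0 := ih (0, mFun u 0) h0W
      have hV1 := ih (1, mFun u 1) h1W
      have he0 : 0 ≤ euP v a0 0 := hevnn a0 0 ⟨le_refl _, zero_le_one⟩
      have he1 : euP v a1 1 = 0 := heva1 1
      have hpow : (0:ℝ) ≤ δ^n := pow_nonneg hδ0.le n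
      have hb0 : -(δ^(n+1) * C) ≤ (1-δ) * euP v a0 0 + δ * Vstar (0, mFun u 0) := by
        have := mul_le_mul_of_nonneg_left hV0 hδ0.le
        rw [pow_succ]
        nlinarith
      have hb1 : -(δ^(n+1) * C) ≤ (1-δ) * euP v a1 1 + δ * Vstar (1, mFun u 1) := by
        have := mul_le_mul_of_nonneg_left hV1 hδ0.le
        rw [pow_succ, he1]
        nlinarith
      have t0 := mul_le_mul_of_nonneg_left hb0 (by linarith [hp.2] : (0:ℝ) ≤ 1 - pw.1)
      have t1 := mul_le_mul_of_nonneg_left hb1 hp.1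
      nlinarith [t0, t1]
  have hVnn : ∀ pw ∈ Wset u, 0 ≤ Vstar pw := by
    intro pw hpw
    by_contra hneg
    push_neg at hneg
    have hten : Filter.Tendsto (fun n : ℕ => δ^n * C) Filter.atTop (nhds 0) := by
      simpa using (tendsto_pow_atTop_nhds_zero_of_lt_one hδ0.le hδ1).mul_const C
    obtain ⟨n, hn⟩ := (hten.eventually (gt_mem_nhds (by linarith : (0:ℝ) < -Vstar pw))).exists
    have h2 := hVnnAux n pw hpw
    have hn' : δ^n * C < -Vstar pw := hn
    linarith
  -- uniform distribution facts
  have hcardS : (0:ℝ) < (Fintype.card S : ℝ) := by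
    have : 0 < Fintype.card S := by omega
    exact_mod_cast this
  have hsum1 : ∑ _s : S, ((Fintype.card S : ℝ))⁻¹ = 1 := by
    rw [Finset.sum_const, nsmul_eq_mul, Finset.card_univ]
    field_simp
  have hinv0 : (0:ℝ) ≤ ((Fintype.card S : ℝ))⁻¹ := by positivity
  have hinv1 : ((Fintype.card S : ℝ))⁻¹ ≤ 1 := by
    rw [inv_le_one_iff₀]
    right
    exact_mod_cast Nat.one_le_iff_ne_zero.2 (by omega)
  -- the "stay put" bound: at (q, m(q)) the principal can secure the static payoff
  have hstay : ∀ q ∈ Set.Icc (0:ℝ) 1, ∀ a : A, euP u a q = mFun u q →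
      euP v a q ≤ Vstar (q, mFun u q) := by
    intro q hq a ha
    have hFeas : Feasible u δ (q, mFun u q)
        (⟨fun _ => ((Fintype.card S : ℝ))⁻¹, fun _ => q, fun _ => mFun u q, fun _ => a⟩ : Fam A S) := by
      refine ⟨fun s => ⟨hinv0, hinv1⟩, fun s => mem_W_m u hq, fun s => ?_, ?_, ?_, ?_⟩
      · dsimp only
        simp only [ha]
        exact le_of_eq (by ring)
      · dsimp only
        simp only [ha]
        have e : ∀ s : S, ((Fintype.card S : ℝ))⁻¹ * ((1-δ) * mFun u q + δ * mFun u q)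
            = ((Fintype.card S : ℝ))⁻¹ * mFun u q := fun s => by ring
        rw [Finset.sum_congr rfl (fun s _ => e s), ← Finset.sum_mul, hsum1, one_mul]
      · dsimp only
        rw [← Finset.sum_mul, hsum1, one_mul]
      · dsimp only
        exact hsum1
    have h1 := hVge (q, mFun u q) (mem_W_m u hq) _ hFeas
    have h2 : famPayoff v δ Vstar
        (⟨fun _ => ((Fintype.card S : ℝ))⁻¹, fun _ => q, fun _ => mFun u q, fun _ => a⟩ : Fam A S)
        = (1-δ) * euP v a q + δ * Vstar (q, mFun u q) := by
      unfold famPayoff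
      dsimp only
      rw [← Finset.sum_mul, hsum1, one_mul]
    rw [h2] at h1
    have h3 : (1-δ) * euP v a q ≤ (1-δ) * Vstar (q, mFun u q) := by linarith
    exact le_of_mul_le_mul_left h3 (by linarith)
  -- convexity of m
  have hmconv : ∀ (lam pos : S → ℝ), (∀ s, 0 ≤ lam s) → (∑ s, lam s = 1) →
      mFun u (∑ s, lam s * pos s) ≤ ∑ s, lam s * mFun u (pos s) := by
    intro lam pos hlam h1
    rw [mFun_eq_max u a0 a1 hall]
    apply max_le
    · rw [← euP_sum u a0 lam pos h1]
      apply Finset.sum_le_sum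
      intro s _
      apply mul_le_mul_of_nonneg_left _ (hlam s)
      rw [mFun_eq_max u a0 a1 hall]
      exact le_max_left _ _
    · rw [← euP_sum u a1 lam pos h1]
      apply Finset.sum_le_sum
      intro s _
      apply mul_le_mul_of_nonneg_left _ (hlam s)
      rw [mFun_eq_max u a0 a1 hall]
      exact le_max_right _ _
  -- lower bound: every static value is dominated by Vstar (p, m p)
  have hlow : ∀ p : ℝ, p ∈ Set.Icc (0:ℝ) 1 → ∀ (lam pos : S → ℝ) (act : S → A),
      (∀ s, lam s ∈ Set.Icc (0:ℝ) 1) → (∀ s, pos s ∈ Set.Icc (0:ℝ) 1) →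
      (∑ s, lam s = 1) → (∑ s, lam s * pos s = p) →
      (∀ s, euP u (act s) (pos s) = mFun u (pos s)) →
      ∑ s, lam s * euP v (act s) (pos s) ≤ Vstar (p, mFun u p) := by
    intro p hp lam pos act hlam hpos hsum hbayes hopt
    have hFeas : Feasible u δ (p, mFun u p)
        (⟨lam, pos, fun s => mFun u (pos s), act⟩ : Fam A S) := by
      refine ⟨hlam, fun s => mem_W_m u (hpos s), fun s => ?_, ?_, ?_, ?_⟩
      · dsimp only
        rw [hopt s]
        exact le_of_eq (by ring)
      · dsimp only
        have e : ∀ s : S, lam s * ((1-δ) * euP u (act s) (pos s) + δ * mFun u (pos s))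
            = lam s * mFun u (pos s) := by
          intro s; rw [hopt s]; ring
        rw [Finset.sum_congr rfl (fun s _ => e s)]
        show mFun u p ≤ _
        rw [← hbayes]
        exact hmconv lam pos (fun s => (hlam s).1) hsum
      · exact hbayes
      · exact hsum
    have h1 := hVge (p, mFun u p) (mem_W_m u hp) _ hFeas
    refine le_trans ?_ h1
    unfold famPayoff
    dsimp only
    calc ∑ s, lam s * euP v (act s) (pos s)
        = ∑ s, lam s * ((1-δ) * euP v (act s) (pos s) + δ * euP v (act s) (pos s)) :=
          Finset.sum_congr rfl (fun s _ => by ring)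
      _ ≤ ∑ s, lam s * ((1-δ) * euP v (act s) (pos s) + δ * Vstar (pos s, mFun u (pos s))) := by
          apply Finset.sum_le_sum
          intro s _
          apply mul_le_mul_of_nonneg_left _ (hlam s).1
          have hst := hstay (pos s) (hpos s) (act s) (hopt s)
          exact add_le_add_right (mul_le_mul_of_nonneg_left hst hδ0.le) _
  -- dual variable and linear supersolution
  have hD1 : 0 < u a1 true - u a0 true := by linarith
  set c : ℝ := v a0 true / (u a1 true - u a0 true) with hcdef
  have hc : 0 ≤ c := div_nonneg hv1.le hD1.le
  have hc1 : c * (u a1 true - u a0 true) = v a0 true := div_mul_cancel₀ _ hD1.ne'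
  set g : ℝ × ℝ → ℝ := fun pw => euP v a0 pw.1 + c * (euP u a0 pw.1 - pw.2) with hgdef
  have hkey : ∀ q : ℝ, q ∈ Set.Icc (0:ℝ) 1 → c * (euP u a1 q - euP u a0 q) ≤ euP v a0 q := by
    intro q hq
    have h1 : (1 - q) * (c * (u a1 false - u a0 false)) ≤ 0 :=
      mul_nonpos_of_nonneg_of_nonpos (by linarith [hq.2])
        (mul_nonpos_of_nonneg_of_nonpos hc (by linarith))
    have h2 : 0 ≤ (1 - q) * v a0 false := mul_nonneg (by linarith [hq.2]) hv0.le
    have h3 : q * (c * (u a1 true - u a0 true)) = q * v a0 true := by rw [hc1]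
    unfold euP
    nlinarith [h1, h2, h3]
  have hstep : ∀ B : ℝ, 0 ≤ B → (∀ pw ∈ Wset u, Vstar pw ≤ g pw + B) →
      ∀ pw ∈ Wset u, Vstar pw ≤ g pw + δ * B := by
    intro B hB hIH pw hpw
    rw [← hVfix pw hpw]
    apply csSup_le
    · obtain ⟨f, hf, _⟩ := hrev pw hpw
      exact ⟨famPayoff v δ Vstar f, f, hf, rfl⟩
    rintro x ⟨f, hf, rfl⟩
    obtain ⟨hf1, hf2, hf3, hf4, hf5, hf6⟩ := hf
    have hterm : ∀ s : S, (1-δ) * euP v (f.act s) (f.belief s) + δ * Vstar (f.belief s, f.promise s)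
        ≤ (euP v a0 (f.belief s) + c * (euP u a0 (f.belief s)
            - ((1-δ) * euP u (f.act s) (f.belief s) + δ * f.promise s))) + δ * B := by
      intro s
      have hbW := hf2 s
      have hV := hIH _ hbW
      have hgb : g (f.belief s, f.promise s)
          = euP v a0 (f.belief s) + c * (euP u a0 (f.belief s) - f.promise s) := by
        simp only [hgdef]
      rw [hgb] at hV
      rcases hall (f.act s) with h | h <;> rw [h]
      · nlinarith [mul_le_mul_of_nonneg_left hV hδ0.le]
      · have hk := hkey (f.belief s) hbW.1
        have hk2 := mul_le_mul_of_nonneg_left hk (by linarith : (0:ℝ) ≤ 1 - δ)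
        rw [heva1]
        nlinarith [mul_le_mul_of_nonneg_left hV hδ0.le, hk2]
    unfold famPayoff
    have hsum2 : ∑ s, f.prob s * ((euP v a0 (f.belief s) + c * (euP u a0 (f.belief s)
            - ((1-δ) * euP u (f.act s) (f.belief s) + δ * f.promise s))) + δ * B)
        = (∑ s, f.prob s * euP v a0 (f.belief s))
          + c * (∑ s, f.prob s * euP u a0 (f.belief s))
          - c * (∑ s, f.prob s * ((1-δ) * euP u (f.act s) (f.belief s) + δ * f.promise s))
          + (∑ s, f.prob s) * (δ * B) := by
      rw [Finset.mul_sum, Finset.mul_sum, Finset.sum_mul, ← Finset.sum_add_distrib,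
        ← Finset.sum_sub_distrib, ← Finset.sum_add_distrib]
      exact Finset.sum_congr rfl (fun s _ => by ring)
    calc ∑ s, f.prob s * ((1-δ) * euP v (f.act s) (f.belief s) + δ * Vstar (f.belief s, f.promise s))
        ≤ ∑ s, f.prob s * ((euP v a0 (f.belief s) + c * (euP u a0 (f.belief s)
            - ((1-δ) * euP u (f.act s) (f.belief s) + δ * f.promise s))) + δ * B) :=
          Finset.sum_le_sum (fun s _ => mul_le_mul_of_nonneg_left (hterm s) (hf1 s).1)
      _ ≤ g pw + δ * B := by
          rw [hsum2, euP_sum v a0 f.prob f.belief hf6, euP_sum u a0 f.prob f.belief hf6,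
            hf5, hf6, one_mul]
          have h4 := mul_le_mul_of_nonneg_left hf4 hc
          simp only [hgdef]
          linarith
  -- bounds needed for the base case
  set Ub : ℝ := |u a0 false| + |u a0 true| + |u a1 false| + |u a1 true| with hUbdef
  have hUbnn : 0 ≤ Ub := by
    rw [hUbdef]; positivity
  have hEb : ∀ (a : A) (q : ℝ), q ∈ Set.Icc (0:ℝ) 1 → |euP u a q| ≤ Ub := by
    intro a q hq
    unfold euP
    refine le_trans (abs_affine_le _ _ q hq.1 hq.2) ?_
    rcases hall a with h | h <;> rw [h, hUbdef] <;>
      linarith [abs_nonneg (u a0 false), abs_nonneg (u a0 true),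
        abs_nonneg (u a1 false), abs_nonneg (u a1 true)]
  have hMb : ∀ q : ℝ, q ∈ Set.Icc (0:ℝ) 1 → |MFun u q| ≤ Ub := by
    intro q hq
    rw [hMf q]
    refine le_trans (abs_affine_le _ _ q hq.1 hq.2) ?_
    rw [hUbdef]
    linarith [abs_nonneg (u a0 true), abs_nonneg (u a1 false)]
  have hwb : ∀ pw : ℝ × ℝ, pw ∈ Wset u → pw.2 ≤ Ub := fun pw hpw =>
    le_trans hpw.2.2 (le_trans (le_abs_self _) (hMb pw.1 hpw.1))
  have hglb : ∀ pw : ℝ × ℝ, pw ∈ Wset u → -(c * (2 * Ub)) ≤ g pw := by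
    intro pw hpw
    have h1 : 0 ≤ euP v a0 pw.1 := hevnn a0 pw.1 hpw.1
    have h2 : -Ub ≤ euP u a0 pw.1 := (abs_le.1 (hEb a0 pw.1 hpw.1)).1
    have h3 := hwb pw hpw
    have h4 : -(2*Ub) ≤ euP u a0 pw.1 - pw.2 := by linarith
    have h5 := mul_le_mul_of_nonneg_left h4 hc
    simp only [hgdef]
    nlinarith [h5]
  set C2 : ℝ := C + c * (2 * Ub) with hC2def
  have hC2nn : 0 ≤ C2 := by
    rw [hC2def]
    have := mul_nonneg hc (by linarith : (0:ℝ) ≤ 2 * Ub)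
    linarith
  have hub : ∀ n : ℕ, ∀ pw ∈ Wset u, Vstar pw ≤ g pw + δ^n * C2 := by
    intro n
    induction n with
    | zero =>
      intro pw hpw
      have h1 := (abs_le.1 (hC pw hpw)).2
      have h2 := hglb pw hpw
      rw [pow_zero, one_mul, hC2def]
      linarith
    | succ n ih =>
      intro pw hpw
      have h := hstep (δ^n * C2) (mul_nonneg (pow_nonneg hδ0.le n) hC2nn) ih pw hpw
      refine le_trans h (le_of_eq ?_)
      rw [pow_succ]
      ring
  have hupper : ∀ pw ∈ Wset u, Vstar pw ≤ g pw := by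
    intro pw hpw
    by_contra hneg
    push_neg at hneg
    have hten : Filter.Tendsto (fun n : ℕ => δ^n * C2) Filter.atTop (nhds 0) := by
      simpa using (tendsto_pow_atTop_nhds_zero_of_lt_one hδ0.le hδ1).mul_const C2
    obtain ⟨n, hn⟩ := (hten.eventually
      (gt_mem_nhds (by linarith : (0:ℝ) < Vstar pw - g pw))).exists
    have hn' : δ^n * C2 < Vstar pw - g pw := hn
    have := hub n pw hpw
    linarith
  -- conclusion
  intro p hp
  have hSbdd : BddAbove {x : ℝ | ∃ lam pos : S → ℝ, ∃ act : S → A,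
      (∀ s, lam s ∈ Set.Icc (0 : ℝ) 1) ∧ (∀ s, pos s ∈ Set.Icc (0 : ℝ) 1) ∧
      (∑ s, lam s = 1) ∧ (∑ s, lam s * pos s = p) ∧
      (∀ s, euP u (act s) (pos s) = mFun u (pos s)) ∧
      x = ∑ s, lam s * euP v (act s) (pos s)} := by
    refine ⟨Kv, ?_⟩
    rintro x ⟨lam, pos, act, h1, h2, h3, h4, h5, rfl⟩
    calc ∑ s, lam s * euP v (act s) (pos s) ≤ ∑ s, lam s * Kv :=
          Finset.sum_le_sum (fun s _ =>
            mul_le_mul_of_nonneg_left (hKv (act s) (pos s) (h2 s)) (h1 s).1)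
      _ = Kv := by rw [← Finset.sum_mul, h3, one_mul]
  have hmem : g (p, mFun u p) ∈ {x : ℝ | ∃ lam pos : S → ℝ, ∃ act : S → A,
      (∀ s, lam s ∈ Set.Icc (0 : ℝ) 1) ∧ (∀ s, pos s ∈ Set.Icc (0 : ℝ) 1) ∧
      (∑ s, lam s = 1) ∧ (∑ s, lam s * pos s = p) ∧
      (∀ s, euP u (act s) (pos s) = mFun u (pos s)) ∧
      x = ∑ s, lam s * euP v (act s) (pos s)} := by
    by_cases hcase : euP u a1 p ≤ euP u a0 p
    · refine ⟨fun _ => ((Fintype.card S : ℝ))⁻¹, fun _ => p, fun _ => a0,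
        fun s => ⟨hinv0, hinv1⟩, fun s => hp, hsum1, ?_, ?_, ?_⟩
      · rw [← Finset.sum_mul, hsum1, one_mul]
      · intro s
        rw [mFun_eq_max u a0 a1 hall, max_eq_left hcase]
      · rw [← Finset.sum_mul, hsum1, one_mul]
        simp only [hgdef]
        rw [mFun_eq_max u a0 a1 hall, max_eq_left hcase]
        ring
    · push_neg at hcase
      have hd : 0 < (u a1 true - u a0 true) + (u a0 false - u a1 false) := by linarith
      set q : ℝ := (u a0 false - u a1 false) / ((u a1 true - u a0 true) + (u a0 false - u a1 false))
        with hqdef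
      have hqd : q * ((u a1 true - u a0 true) + (u a0 false - u a1 false))
          = u a0 false - u a1 false := div_mul_cancel₀ _ hd.ne'
      have hq0 : 0 ≤ q := div_nonneg (by linarith) hd.le
      have h1qe : 1 - q = (u a1 true - u a0 true)
          / ((u a1 true - u a0 true) + (u a0 false - u a1 false)) := by
        rw [hqdef]
        field_simp
        ring
      have h1q : 0 < 1 - q := by
        rw [h1qe]; exact div_pos (by linarith) hd
      have hindiff : euP u a1 q = euP u a0 q := by
        unfold euP; linear_combination hqd
      have hdpq : euP u a1 p - euP u a0 p
          = ((u a1 true - u a0 true) + (u a0 false - u a1 false)) * (p - q) := by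
        unfold euP; linear_combination hqd
      have hqp : q < p := by nlinarith [hdpq, hcase, hd]
      have hq1 : q < 1 := by linarith
      set lamq : ℝ := (1 - p) / (1 - q) with hlamdef
      have hlam0 : 0 ≤ lamq := div_nonneg (by linarith [hp.2]) h1q.le
      have hlamq : lamq * (1 - q) = 1 - p := div_mul_cancel₀ _ h1q.ne'
      have hlam1 : lamq ≤ 1 := by
        rw [hlamdef, div_le_one h1q]; linarith
      have hlin : (euP v a0 p + c * (euP u a0 p - euP u a1 p)) * (1 - q)
          = euP v a0 q * (1 - p) := by
        unfold euP
        linear_combination (q - p) * hc1 - c * (1 - p) * hqd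
      have hfin : euP v a0 p + c * (euP u a0 p - euP u a1 p) = lamq * euP v a0 q := by
        have h2 : (euP v a0 p + c * (euP u a0 p - euP u a1 p)) * (1 - q)
            = (lamq * euP v a0 q) * (1 - q) := by
          linear_combination hlin - euP v a0 q * hlamq
        exact mul_right_cancel₀ h1q.ne' h2
      refine ⟨fun s => if s = s0 then lamq else if s = s1 then 1 - lamq else 0,
        fun s => if s = s0 then q else 1,
        fun s => if s = s0 then a0 else a1, ?_, ?_, ?_, ?_, ?_, ?_⟩
      · intro s
        dsimp only
        split_ifs
        · exact ⟨hlam0, hlam1⟩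
        · exact ⟨by linarith, by linarith⟩
        · exact ⟨le_refl _, zero_le_one⟩
      · intro s
        dsimp only
        split_ifs
        · exact ⟨hq0, hq1.le⟩
        · exact ⟨zero_le_one, le_refl _⟩
      · rw [sum_pair_of_zero hs01 _ (fun s h h' => by simp [if_neg h, if_neg h'])]
        simp only [if_pos (rfl : s0 = s0), if_neg (Ne.symm hs01), if_true]
        ring
      · rw [sum_pair_of_zero hs01 _ (fun s h h' => by simp [if_neg h, if_neg h'])]
        simp only [if_pos (rfl : s0 = s0), if_neg (Ne.symm hs01), if_true]
        linear_combination -hlamq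
      · intro s
        dsimp only
        split_ifs
        · rw [mFun_eq_max u a0 a1 hall, hindiff, max_self]
        · rw [hm1, heu1]
      · rw [sum_pair_of_zero hs01 _ (fun s h h' => by simp [if_neg h, if_neg h'])]
        simp only [if_pos (rfl : s0 = s0), if_neg (Ne.symm hs01), if_true]
        simp only [hgdef]
        rw [mFun_eq_max u a0 a1 hall, max_eq_right hcase.le, heva1]
        linear_combination hfin
  refine le_antisymm ?_ ?_
  · exact le_trans (hupper (p, mFun u p) (mem_W_m u hp)) (le_csSup hSbdd hmem)
  · refine csSup_le ⟨_, hmem⟩ ?_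
    rintro x ⟨lam, pos, act, h1, h2, h3, h4, h5, rfl⟩
    exact hlow p hp lam pos act h1 h2 h3 h4 h5
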